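/- For t ∈ ℂ with |t| < 1, set ω_t := (i/2)(φ1∧φ̄1 + φ2∧φ̄2 + φ3∧φ̄3) ∈ Λ^{1,1}. Then ∂_t∂̄_t(ω_t) = 0 if and only if |t|² + Re(t) − Im(t) = 0. (That is, the invariant Hermitian metric ω_t on the deformation X_t of the Calabi–Eckmann manifold S³×S³ is SKT exactly when |t|² + Re(t) − Im(t) = 0.) -/

import Mathlib

open Complex

noncomputable section

/-- The 64-dimensional exterior algebra on six generators, modelled as
functions from subsets of `Fin 6` to `ℂ`. The generators `φ 0, φ 1, φ 2`
represent `φ1, φ2, φ3` (bidegree `(1,0)`) and `φ 3, φ 4, φ 5` represent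
`φ̄1, φ̄2, φ̄3` (bidegree `(0,1)`). -/
abbrev Lam : Type := Finset (Fin 6) → ℂ

/-- Basis monomial indexed by a subset of the generators. -/
def mon (S : Finset (Fin 6)) : Lam := Pi.single S 1

/-- The generators. -/
def φ (j : Fin 6) : Lam := mon {j}

/-- The Koszul sign. -/
def wsign (T U : Finset (Fin 6)) : ℂ :=
  (-1 : ℂ) ^ (((T ×ˢ U).filter fun p => p.2 < p.1).card)

/-- The wedge product. -/
def wedge (x y : Lam) : Lam :=
  fun S => ∑ T ∈ S.powerset, wsign T (S \ T) * x T * y (S \ T)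

infixr:70 " ⋏ " => wedge

/-- The bidegree-`(p,q)` component `Λ^{p,q}`. -/
def Lpq (p q : ℕ) : Submodule ℂ Lam where
  carrier := {x | ∀ S : Finset (Fin 6),
    ¬((S.filter fun i : Fin 6 => (i : ℕ) < 3).card = p ∧ (S.filter fun i : Fin 6 => 3 ≤ (i : ℕ)).card = q) →
      x S = 0}
  add_mem' := by intro a b ha hb S hS; simp [ha S hS, hb S hS]
  zero_mem' := by intro S _; rfl
  smul_mem' := by intro c x hx S hS; simp [hx S hS]

/-- The total-degree-`k` component. -/
def Ldeg (k : ℕ) : Submodule ℂ Lam where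
  carrier := {x | ∀ S : Finset (Fin 6), S.card ≠ k → x S = 0}
  add_mem' := by intro a b ha hb S hS; simp [ha S hS, hb S hS]
  zero_mem' := by intro S _; rfl
  smul_mem' := by intro c x hx S hS; simp [hx S hS]

/-- `D` is a graded derivation of bidegree `(a,b)`: it maps `Λ^{p,q}` to `Λ^{p+a,q+b}` and
satisfies the graded Leibniz rule with the sign of the total degree. -/
def IsDer (D : Lam →ₗ[ℂ] Lam) (a b : ℕ) : Prop :=
  (∀ p q : ℕ, ∀ x ∈ Lpq p q, D x ∈ Lpq (p + a) (q + b)) ∧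
  (∀ k : ℕ, ∀ x ∈ Ldeg k, ∀ y : Lam,
    D (x ⋏ y) = (D x) ⋏ y + ((-1 : ℂ)) ^ k • (x ⋏ D y))

/-- `D` is the operator `∂_t` : the graded derivation of bidegree `(1,0)` determined on the
generators by the structure equations of the deformed Calabi–Eckmann structure `J_t`
(the values on the conjugate generators `φ 3, φ 4, φ 5` being obtained
by applying the conjugation `σ` to the values of `∂̄_t`). -/
def IsDelT (t : ℂ) (D : Lam →ₗ[ℂ] Lam) : Prop :=
  IsDer D 1 0 ∧
  D (φ 0) = (Complex.I * ((starRingEnd ℂ) t + 1) / (1 - Complex.normSq t)) • (φ 0 ⋏ φ 2) ∧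
  D (φ 1) = ((1 - (starRingEnd ℂ) t) / (1 - Complex.normSq t)) • (φ 1 ⋏ φ 2) ∧
  D (φ 2) = 0 ∧
  D (φ 3) = (-(Complex.I * ((starRingEnd ℂ) t + 1)) / (1 - Complex.normSq t)) • (φ 3 ⋏ φ 2) ∧
  D (φ 4) = (((starRingEnd ℂ) t - 1) / (1 - Complex.normSq t)) • (φ 4 ⋏ φ 2) ∧
  D (φ 5) = ((starRingEnd ℂ) t + Complex.I) • (φ 3 ⋏ φ 0) + ((starRingEnd ℂ) t + 1) • (φ 4 ⋏ φ 1)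

/-- `Db` is the operator `∂̄_t`. -/
def IsDelBarT (t : ℂ) (Db : Lam →ₗ[ℂ] Lam) : Prop :=
  IsDer Db 0 1 ∧
  Db (φ 0) = (Complex.I * (t + 1) / (1 - Complex.normSq t)) • (φ 0 ⋏ φ 5) ∧
  Db (φ 1) = ((t - 1) / (1 - Complex.normSq t)) • (φ 1 ⋏ φ 5) ∧
  Db (φ 2) = (t - Complex.I) • (φ 0 ⋏ φ 3) + (t + 1) • (φ 1 ⋏ φ 4) ∧
  Db (φ 3) = (-(Complex.I * (t + 1)) / (1 - Complex.normSq t)) • (φ 3 ⋏ φ 5) ∧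
  Db (φ 4) = ((1 - t) / (1 - Complex.normSq t)) • (φ 4 ⋏ φ 5) ∧
  Db (φ 5) = 0

/-- The Bott–Chern cocycles in bidegree `(p,q)` : `Ker ∂ ∩ Ker ∂̄ ∩ Λ^{p,q}`. -/
def Kbc (D Db : Lam →ₗ[ℂ] Lam) (p q : ℕ) : Submodule ℂ Lam :=
  LinearMap.ker D ⊓ LinearMap.ker Db ⊓ Lpq p q

/-- The Bott–Chern coboundaries in bidegree `(p,q)` : `∂∂̄(Λ^{p-1,q-1})`
(zero when `p = 0` or `q = 0`). -/
def Ibc (D Db : Lam →ₗ[ℂ] Lam) (p q : ℕ) : Submodule ℂ Lam :=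
  if p = 0 ∨ q = 0 then ⊥ else Submodule.map (D ∘ₗ Db) (Lpq (p - 1) (q - 1))

/-- The Aeppli cocycles in bidegree `(p,q)` : `Ker (∂∂̄) ∩ Λ^{p,q}`. -/
def Ka (D Db : Lam →ₗ[ℂ] Lam) (p q : ℕ) : Submodule ℂ Lam :=
  LinearMap.ker (D ∘ₗ Db) ⊓ Lpq p q

/-- The Aeppli coboundaries in bidegree `(p,q)` : `∂(Λ^{p-1,q}) + ∂̄(Λ^{p,q-1})`. -/
def Ia (D Db : Lam →ₗ[ℂ] Lam) (p q : ℕ) : Submodule ℂ Lam :=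
  (if p = 0 then ⊥ else Submodule.map D (Lpq (p - 1) q)) ⊔
  (if q = 0 then ⊥ else Submodule.map Db (Lpq p (q - 1)))

end

noncomputable section

/-- The fundamental form `ω_t = (i/2)(φ1∧φ̄1 + φ2∧φ̄2 + φ3∧φ̄3)` of the invariant
Hermitian metric on the deformation `X_t`. -/
def ω : Lam := (Complex.I / 2) • (φ 0 ⋏ φ 3 + φ 1 ⋏ φ 4 + φ 2 ⋏ φ 5)


lemma smul_wedge (c : ℂ) (x y : Lam) : (c • x) ⋏ y = c • (x ⋏ y) := by
  funext S
  simp only [wedge, Pi.smul_apply, smul_eq_mul, Finset.mul_sum]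
  exact Finset.sum_congr rfl fun T _ => by ring

lemma wedge_smul (c : ℂ) (x y : Lam) : x ⋏ (c • y) = c • (x ⋏ y) := by
  funext S
  simp only [wedge, Pi.smul_apply, smul_eq_mul, Finset.mul_sum]
  exact Finset.sum_congr rfl fun T _ => by ring

lemma add_wedge (x y z : Lam) : (x + y) ⋏ z = x ⋏ z + y ⋏ z := by
  funext S
  simp only [wedge, Pi.add_apply, ← Finset.sum_add_distrib]
  exact Finset.sum_congr rfl fun T _ => by ring

lemma wedge_add (x y z : Lam) : x ⋏ (y + z) = x ⋏ y + x ⋏ z := by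
  funext S
  simp only [wedge, Pi.add_apply, ← Finset.sum_add_distrib]
  exact Finset.sum_congr rfl fun T _ => by ring

lemma zero_wedge (y : Lam) : (0 : Lam) ⋏ y = 0 := by
  funext S; simp [wedge]

lemma wedge_zero (x : Lam) : x ⋏ (0 : Lam) = 0 := by
  funext S; simp [wedge]

lemma neg_wedge (x y : Lam) : (-x) ⋏ y = -(x ⋏ y) := by
  funext S
  simp only [wedge, Pi.neg_apply, ← Finset.sum_neg_distrib]
  exact Finset.sum_congr rfl fun T _ => by ring

lemma wedge_neg (x y : Lam) : x ⋏ (-y) = -(x ⋏ y) := by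
  funext S
  simp only [wedge, Pi.neg_apply, ← Finset.sum_neg_distrib]
  exact Finset.sum_congr rfl fun T _ => by ring

lemma mon_wedge_disj (T U : Finset (Fin 6)) (h : Disjoint T U) :
    mon T ⋏ mon U = wsign T U • mon (T ∪ U) := by
  funext S
  simp only [wedge, mon, Pi.smul_apply, smul_eq_mul]
  by_cases hT : T ⊆ S
  · rw [Finset.sum_eq_single_of_mem T (Finset.mem_powerset.2 hT)]
    · by_cases hU : S \ T = U
      · have hS : S = T ∪ U := by rw [← hU, Finset.union_sdiff_of_subset hT]
        subst hS
        simp [Finset.union_sdiff_cancel_left h, Pi.single_apply]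
      · have hS : S ≠ T ∪ U := by
          intro e
          exact hU (by rw [e, Finset.union_sdiff_cancel_left h])
        simp [Pi.single_apply, hU, hS]
    · intro b _ hb; simp [Pi.single_apply, hb]
  · have hS : S ≠ T ∪ U := fun e => hT (e ▸ Finset.subset_union_left)
    rw [Finset.sum_eq_zero]
    · simp [Pi.single_apply, hS]
    · intro b hb
      by_cases hbT : b = T
      · exact absurd (hbT ▸ Finset.mem_powerset.1 hb) hT
      · simp [Pi.single_apply, hbT]

lemma mon_wedge_ndisj (T U : Finset (Fin 6)) (h : ¬ Disjoint T U) :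
    mon T ⋏ mon U = 0 := by
  funext S
  simp only [wedge, mon]
  rw [Finset.sum_eq_zero]
  · rfl
  · intro b hb
    by_cases hbT : b = T
    · subst hbT
      by_cases hU : S \ b = U
      · exact absurd (hU ▸ Finset.sdiff_disjoint.symm) h
      · simp [Pi.single_apply, hU]
    · simp [Pi.single_apply, hbT]


lemma mw1 (T U V : Finset (Fin 6)) (h : Disjoint T U) (hV : T ∪ U = V)
    (hs : (((T ×ˢ U).filter fun p => p.2 < p.1).card) % 2 = 0) :
    mon T ⋏ mon U = mon V := by
  rw [mon_wedge_disj T U h, hV, wsign, (Nat.even_iff.2 hs).neg_one_pow, one_smul]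

lemma mw2 (T U V : Finset (Fin 6)) (h : Disjoint T U) (hV : T ∪ U = V)
    (hs : (((T ×ˢ U).filter fun p => p.2 < p.1).card) % 2 = 1) :
    mon T ⋏ mon U = -mon V := by
  rw [mon_wedge_disj T U h, hV, wsign, (Nat.odd_iff.2 hs).neg_one_pow, neg_one_smul]

lemma phi_deg1 (j : Fin 6) : φ j ∈ Ldeg 1 := by
  intro S hS
  have : S ≠ {j} := by rintro rfl; simp at hS
  simp [φ, mon, Pi.single_apply, this]

example : φ 0 ⋏ φ 3 = mon {0,3} := mw1 {0} {3} {0,3} (by decide) (by decide) (by decide)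
example : (mon {0,5} : Lam) ⋏ φ 3 = -mon {0,3,5} := mw2 {0,5} {3} {0,3,5} (by decide) (by decide) (by decide)
example (x y : Lam) (c d : ℂ) : c • x + d • y - (d • y + c • x) = 0 := by module

lemma sub_wedge (x y z : Lam) : (x - y) ⋏ z = x ⋏ z - y ⋏ z := by
  rw [sub_eq_add_neg, add_wedge, neg_wedge, sub_eq_add_neg]

lemma wedge_sub (x y z : Lam) : x ⋏ (y - z) = x ⋏ y - x ⋏ z := by
  rw [sub_eq_add_neg, wedge_add, wedge_neg, sub_eq_add_neg]


lemma key_scalar (t : ℂ) :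
    (t - Complex.I) * ((starRingEnd ℂ) t + 1) + (t + 1) * ((starRingEnd ℂ) t + Complex.I)
      = 2 * ((Complex.normSq t : ℂ) + (t.re : ℂ) - (t.im : ℂ)) := by
  have hre : t + (starRingEnd ℂ) t = 2 * (t.re : ℂ) := by
    rw [Complex.add_conj]; push_cast; ring
  have him : t - (starRingEnd ℂ) t = 2 * (t.im : ℂ) * Complex.I := by
    rw [Complex.sub_conj]; push_cast; ring
  linear_combination 2 * Complex.mul_conj t + hre +
    Complex.I * him + 2 * (t.im : ℂ) * Complex.I_mul_I


/-- for `|t| < 1`, the invariant Hermitian metric `ω_t` on the deformation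
`X_t` of the Calabi–Eckmann manifold `S³×S³` is SKT (`∂_t∂̄_t ω_t = 0`) if and only if
`|t|² + Re t - Im t = 0`. -/
theorem stmt13 (t : ℂ) (ht : ‖t‖ < 1)
    (D Db : Lam →ₗ[ℂ] Lam) (hD : IsDelT t D) (hDb : IsDelBarT t Db) :
    D (Db ω) = 0 ↔ Complex.normSq t + t.re - t.im = 0 := by
  obtain ⟨⟨-, hLD⟩, hD0, hD1, hD2, hD3, hD4, hD5⟩ := hD
  obtain ⟨⟨-, hLB⟩, hB0, hB1, hB2, hB3, hB4, hB5⟩ := hDb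
  have LD : ∀ (j : Fin 6) (y : Lam), D (φ j ⋏ y) = D (φ j) ⋏ y - φ j ⋏ D y := by
    intro j y
    have h := hLD 1 (φ j) (phi_deg1 j) y
    rw [h, pow_one, neg_one_smul, ← sub_eq_add_neg]
  have LB : ∀ (j : Fin 6) (y : Lam), Db (φ j ⋏ y) = Db (φ j) ⋏ y - φ j ⋏ Db y := by
    intro j y
    have h := hLB 1 (φ j) (phi_deg1 j) y
    rw [h, pow_one, neg_one_smul, ← sub_eq_add_neg]
  -- wedge product values
  have w03 : φ 0 ⋏ φ 3 = mon {0,3} := mw1 {0} {3} _ (by decide) (by decide) (by decide)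
  have w14 : φ 1 ⋏ φ 4 = mon {1,4} := mw1 {1} {4} _ (by decide) (by decide) (by decide)
  have w25 : φ 2 ⋏ φ 5 = mon {2,5} := mw1 {2} {5} _ (by decide) (by decide) (by decide)
  have w05 : φ 0 ⋏ φ 5 = mon {0,5} := mw1 {0} {5} _ (by decide) (by decide) (by decide)
  have w053 : (mon {0,5} : Lam) ⋏ φ 3 = -mon {0,3,5} := mw2 {0,5} {3} _ (by decide) (by decide) (by decide)
  have w35 : φ 3 ⋏ φ 5 = mon {3,5} := mw1 {3} {5} _ (by decide) (by decide) (by decide)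
  have w0_35 : φ 0 ⋏ (mon {3,5} : Lam) = mon {0,3,5} := mw1 {0} {3,5} _ (by decide) (by decide) (by decide)
  have w15 : φ 1 ⋏ φ 5 = mon {1,5} := mw1 {1} {5} _ (by decide) (by decide) (by decide)
  have w154 : (mon {1,5} : Lam) ⋏ φ 4 = -mon {1,4,5} := mw2 {1,5} {4} _ (by decide) (by decide) (by decide)
  have w45 : φ 4 ⋏ φ 5 = mon {4,5} := mw1 {4} {5} _ (by decide) (by decide) (by decide)
  have w1_45 : φ 1 ⋏ (mon {4,5} : Lam) = mon {1,4,5} := mw1 {1} {4,5} _ (by decide) (by decide) (by decide)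
  have w03_5 : (mon {0,3} : Lam) ⋏ φ 5 = mon {0,3,5} := mw1 {0,3} {5} _ (by decide) (by decide) (by decide)
  have w14_5 : (mon {1,4} : Lam) ⋏ φ 5 = mon {1,4,5} := mw1 {1,4} {5} _ (by decide) (by decide) (by decide)
  have w32 : φ 3 ⋏ φ 2 = -mon {2,3} := mw2 {3} {2} _ (by decide) (by decide) (by decide)
  have w30 : φ 3 ⋏ φ 0 = -mon {0,3} := mw2 {3} {0} _ (by decide) (by decide) (by decide)
  have w41 : φ 4 ⋏ φ 1 = -mon {1,4} := mw2 {4} {1} _ (by decide) (by decide) (by decide)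
  have w3_03 : φ 3 ⋏ (mon {0,3} : Lam) = 0 := mon_wedge_ndisj {3} {0,3} (by decide)
  have w3_14 : φ 3 ⋏ (mon {1,4} : Lam) = -mon {1,3,4} := mw2 {3} {1,4} _ (by decide) (by decide) (by decide)
  have w23_5 : (mon {2,3} : Lam) ⋏ φ 5 = mon {2,3,5} := mw1 {2,3} {5} _ (by decide) (by decide) (by decide)
  have w02 : φ 0 ⋏ φ 2 = mon {0,2} := mw1 {0} {2} _ (by decide) (by decide) (by decide)
  have w02_35 : (mon {0,2} : Lam) ⋏ (mon {3,5} : Lam) = mon {0,2,3,5} := mw1 {0,2} {3,5} _ (by decide) (by decide) (by decide)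
  have w0_235 : φ 0 ⋏ (mon {2,3,5} : Lam) = mon {0,2,3,5} := mw1 {0} {2,3,5} _ (by decide) (by decide) (by decide)
  have w0_134 : φ 0 ⋏ (mon {1,3,4} : Lam) = mon {0,1,3,4} := mw1 {0} {1,3,4} _ (by decide) (by decide) (by decide)
  have w12 : φ 1 ⋏ φ 2 = mon {1,2} := mw1 {1} {2} _ (by decide) (by decide) (by decide)
  have w12_45 : (mon {1,2} : Lam) ⋏ (mon {4,5} : Lam) = mon {1,2,4,5} := mw1 {1,2} {4,5} _ (by decide) (by decide) (by decide)
  have w42 : φ 4 ⋏ φ 2 = -mon {2,4} := mw2 {4} {2} _ (by decide) (by decide) (by decide)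
  have w24_5 : (mon {2,4} : Lam) ⋏ φ 5 = mon {2,4,5} := mw1 {2,4} {5} _ (by decide) (by decide) (by decide)
  have w4_03 : φ 4 ⋏ (mon {0,3} : Lam) = mon {0,3,4} := mw1 {4} {0,3} _ (by decide) (by decide) (by decide)
  have w4_14 : φ 4 ⋏ (mon {1,4} : Lam) = 0 := mon_wedge_ndisj {4} {1,4} (by decide)
  have w1_245 : φ 1 ⋏ (mon {2,4,5} : Lam) = mon {1,2,4,5} := mw1 {1} {2,4,5} _ (by decide) (by decide) (by decide)
  have w1_034 : φ 1 ⋏ (mon {0,3,4} : Lam) = -mon {0,1,3,4} := mw2 {1} {0,3,4} _ (by decide) (by decide) (by decide)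
  -- Step 1 : compute Db ω
  have hDbω : Db ω = ((Complex.I / 2) * (t - Complex.I)) • mon {0,3,5}
      + ((Complex.I / 2) * (t + 1)) • mon {1,4,5} := by
    rw [ω, map_smul, map_add, map_add, LB 0 (φ 3), LB 1 (φ 4), LB 2 (φ 5),
      hB0, hB1, hB2, hB3, hB4, hB5]
    simp only [smul_wedge, wedge_smul, add_wedge, wedge_add, wedge_zero, zero_wedge,
      neg_wedge, wedge_neg, wedge_smul, w05, w053, w35, w0_35, w15, w154, w45, w1_45,
      w03_5, w14_5, w03, w14, w25]
    module
  -- Step 2 : compute D (Db ω)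
  have e035 : (mon {0,3,5} : Lam) = φ 0 ⋏ (φ 3 ⋏ φ 5) := by rw [w35, w0_35]
  have e145 : (mon {1,4,5} : Lam) = φ 1 ⋏ (φ 4 ⋏ φ 5) := by rw [w45, w1_45]
  have hfinal : D (Db ω) = ((Complex.I / 2) * ((t - Complex.I) * ((starRingEnd ℂ) t + 1)
      + (t + 1) * ((starRingEnd ℂ) t + Complex.I))) • mon {0,1,3,4} := by
    rw [hDbω, map_add, map_smul, map_smul, e035, e145,
      LD 0 (φ 3 ⋏ φ 5), LD 3 (φ 5), LD 1 (φ 4 ⋏ φ 5), LD 4 (φ 5),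
      hD0, hD1, hD3, hD4, hD5]
    simp only [smul_wedge, wedge_smul, add_wedge, wedge_add, wedge_zero, zero_wedge,
      neg_wedge, wedge_neg, wedge_sub, sub_wedge,
      w32, w30, w41, w3_03, w3_14, w23_5, w02, w02_35, w0_235, w0_134,
      w12, w12_45, w42, w24_5, w4_03, w4_14, w1_245, w1_034, w35, w45]
    module
  have hfinal2 : D (Db ω)
      = (Complex.I * ((Complex.normSq t : ℂ) + (t.re : ℂ) - (t.im : ℂ))) • mon {0,1,3,4} := by
    rw [hfinal]
    congr 1
    rw [key_scalar]
    ring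
  constructor
  · intro h
    rw [hfinal2] at h
    have h2 := congrFun h {0,1,3,4}
    simp only [Pi.smul_apply, mon, Pi.single_eq_same, smul_eq_mul, mul_one, Pi.zero_apply] at h2
    rcases mul_eq_zero.1 h2 with h3 | h3
    · exact absurd h3 Complex.I_ne_zero
    · have h4 : ((Complex.normSq t + t.re - t.im : ℝ) : ℂ) = 0 := by push_cast; linear_combination h3
      exact_mod_cast h4
  · intro h
    rw [hfinal2]
    have h4 : ((Complex.normSq t : ℂ) + (t.re : ℂ) - (t.im : ℂ)) = 0 := by
      have := congrArg (fun r : ℝ => (r : ℂ)) h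
      push_cast at this
      linear_combination this
    rw [h4, mul_zero, zero_smul]


end
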